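/- For the 4×4 matrix H⁽⁴⁾(a,0) with diagonal (2-ia, 2-ia, 2+ia, 2+ia) and off-diagonal entries -1, the eigenvalues are 2 ± (1/2)·√(6 - 4a² ± 2√(5 - 16a²)), and all four eigenvalues are real if and only if |a| ≤ √5/4. -/

import Mathlib

open Matrix Complex

/-- H⁽⁴⁾(a,0): tridiagonal with diagonal (2-ia, 2-ia, 2+ia, 2+ia), off-diagonal -1. -/
noncomputable def H4z0 (a : ℝ) : Matrix (Fin 4) (Fin 4) ℂ :=
  !![2 - a * Complex.I, -1, 0, 0;
     -1, 2 - a * Complex.I, -1, 0;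
     0, -1, 2 + a * Complex.I, -1;
     0, 0, -1, 2 + a * Complex.I]

lemma det_key (a : ℝ) (z : ℂ) :
    (z • (1 : Matrix (Fin 4) (Fin 4) ℂ) - H4z0 a).det
      = ((z - 2)^2 + (a:ℂ)^2)^2 - 3*(z-2)^2 + (a:ℂ)^2 + 1 := by
  simp [Matrix.det_succ_row_zero, Fin.sum_univ_succ, H4z0, Matrix.smul_apply, Matrix.one_apply,
    Matrix.sub_apply, Fin.succAbove]
  ring_nf
  simp [Complex.I_sq]
  ring

lemma mem_iff (a : ℝ) (z : ℂ) :
    z ∈ spectrum ℂ (H4z0 a) ↔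
      ((z - 2)^2 + (a:ℂ)^2)^2 - 3*(z-2)^2 + (a:ℂ)^2 + 1 = 0 := by
  rw [spectrum.mem_iff, Matrix.isUnit_iff_isUnit_det, isUnit_iff_ne_zero, not_ne_iff,
    Algebra.algebraMap_eq_smul_one, det_key]

lemma real_case (a r q : ℝ) (ha : 16 * a^2 ≤ 5)
    (hre : (r^2 - q^2 + a^2)^2 - 4*r^2*q^2 - 3*(r^2 - q^2) + a^2 + 1 = 0)
    (him : 2*q*(r*(2*(r^2 - q^2 + a^2) - 3)) = 0) : q = 0 := by
  by_contra hq0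
  have hq2 : 0 < q^2 := by positivity
  have h1 : r * (2*(r^2 - q^2 + a^2) - 3) = 0 := by
    rcases mul_eq_zero.mp him with h | h
    · exact absurd (by linarith : q = 0) hq0
    · exact h
  rcases mul_eq_zero.mp h1 with hr0 | hA
  · rw [hr0] at hre
    nlinarith [sq_nonneg (a^2 - q^2), sq_nonneg q, sq_nonneg a]
  · have hA' : r^2 - q^2 + a^2 = 3/2 := by linarith
    rw [hA'] at hre
    have hr2 : r^2 = 3/2 + q^2 - a^2 := by linarith
    have h2 : r^2 * q^2 = (3/2 + q^2 - a^2) * q^2 := by rw [hr2]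
    nlinarith [mul_le_mul_of_nonneg_right ha (sq_nonneg q), mul_pos hq2 hq2]

theorem H4z0_spectrum (a : ℝ) :
    (∀ ε₁ ε₂ : ℝ, (ε₁ = 1 ∨ ε₁ = -1) → (ε₂ = 1 ∨ ε₂ = -1) →
      0 ≤ 5 - 16 * a ^ 2 →
      0 ≤ 6 - 4 * a ^ 2 + ε₂ * (2 * Real.sqrt (5 - 16 * a ^ 2)) →
      ((2 + ε₁ * ((1 : ℝ) / 2) *
          Real.sqrt (6 - 4 * a ^ 2 + ε₂ * (2 * Real.sqrt (5 - 16 * a ^ 2))) : ℝ) : ℂ)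
        ∈ spectrum ℂ (H4z0 a)) ∧
    ((∀ z ∈ spectrum ℂ (H4z0 a), z.im = 0) ↔ |a| ≤ Real.sqrt 5 / 4) := by
  constructor
  · intro ε₁ ε₂ hε₁ hε₂ h5 hT
    rw [mem_iff]
    set s := Real.sqrt (5 - 16 * a ^ 2) with hs
    set x := ε₁ * ((1:ℝ)/2) * Real.sqrt (6 - 4 * a ^ 2 + ε₂ * (2 * s)) with hx
    have hs2 : s^2 = 5 - 16 * a ^ 2 := Real.sq_sqrt h5
    have hε₁2 : ε₁^2 = 1 := by rcases hε₁ with h | h <;> rw [h] <;> norm_num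
    have hε₂2 : ε₂^2 = 1 := by rcases hε₂ with h | h <;> rw [h] <;> norm_num
    have hx2 : x^2 = (6 - 4 * a ^ 2 + ε₂ * (2 * s))/4 := by
      rw [hx, mul_pow, mul_pow, Real.sq_sqrt hT, hε₁2]
      ring
    have key : (x^2 + a^2)^2 - 3*x^2 + a^2 + 1 = 0 := by
      rw [hx2]
      linear_combination ((1:ℝ)/4) * s^2 * hε₂2 + ((1:ℝ)/4) * hs2
    have hcast : ((2 + x : ℝ) : ℂ) - 2 = (x : ℂ) := by push_cast; ring
    rw [hcast]
    have : (((x:ℂ))^2 + (a:ℂ)^2)^2 - 3*(x:ℂ)^2 + (a:ℂ)^2 + 1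
        = (((x^2 + a^2)^2 - 3*x^2 + a^2 + 1 : ℝ) : ℂ) := by push_cast; ring
    rw [this, key, Complex.ofReal_zero]
  · constructor
    · -- all real → |a| ≤ √5/4
      intro hall
      by_contra hgt
      push_neg at hgt
      have h5 : 0 < 16 * a ^ 2 - 5 := by
        have h5nn : (0:ℝ) ≤ 5 := by norm_num
        nlinarith [Real.sq_sqrt h5nn, Real.sqrt_nonneg 5, _root_.sq_abs a, abs_nonneg a,
          mul_self_lt_mul_self (by positivity : (0:ℝ) ≤ Real.sqrt 5 / 4) hgt]
      set t := Real.sqrt (16 * a ^ 2 - 5) with ht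
      have ht2 : t^2 = 16 * a ^ 2 - 5 := Real.sq_sqrt h5.le
      have htpos : 0 < t := Real.sqrt_pos.mpr h5
      set y : ℂ := (((3 - 2*a^2)/2 : ℝ) : ℂ) + ((t/2 : ℝ) : ℂ) * Complex.I with hy
      obtain ⟨x, hxy⟩ := IsAlgClosed.exists_pow_nat_eq y (n := 2) (by norm_num)
      have hmem : (2 + x) ∈ spectrum ℂ (H4z0 a) := by
        rw [mem_iff]
        have h2x : (2 + x) - 2 = x := by ring
        rw [h2x]
        have ht2c : ((t:ℂ))^2 = 16 * (a:ℂ)^2 - 5 := by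
          exact_mod_cast ht2
        rw [hy] at hxy
        push_cast at hxy ht2c
        linear_combination (x^2 + (3 - 2*(a:ℂ)^2)/2 + ((t:ℂ)/2)*Complex.I
          + 2*(a:ℂ)^2 - 3) * hxy + ((t:ℂ)^2/4) * Complex.I_sq - (1/4) * ht2c
      have him0 := hall _ hmem
      have hxim : x.im = 0 := by simpa using him0
      have h1 : (x^2).im = t/2 := by rw [hxy, hy]; simp [pow_two, Complex.mul_im]
      rw [pow_two, Complex.mul_im, hxim] at h1
      norm_num at h1
      linarith
    · -- |a| ≤ √5/4 → all real
      intro hle z hz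
      have ha : 16 * a^2 ≤ 5 := by
        nlinarith [Real.sq_sqrt (show (0:ℝ) ≤ 5 by norm_num), Real.sqrt_nonneg 5, _root_.sq_abs a,
          abs_nonneg a, mul_self_le_mul_self (abs_nonneg a) hle]
      rw [mem_iff] at hz
      obtain ⟨p, q⟩ := z
      show q = 0
      have hre := congrArg Complex.re hz
      have him := congrArg Complex.im hz
      simp [pow_two, Complex.mul_re, Complex.mul_im, Complex.sub_re, Complex.sub_im] at hre him
      refine real_case a (p - 2) q ha ?_ ?_
      · linear_combination hre
      · linear_combination him
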